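/- arXiv:1905.01082 — 5 statements merged into one kernel-verified Lean document; each statement's English description precedes it below -/
import Mathlib

section
/- Let n ≥ 1 and let E, A ∈ ℝ^{n×n}. If E is symmetric positive definite and A + Aᵀ is negative definite (i.e., the system (E, A) is dissipative), then every eigenvalue of the matrix pencil (E, A) has negative real part, i.e., every λ ∈ ℂ with det(λ·E − A) = 0 (entries coerced to ℂ) satisfies Re(λ) < 0. -/
open Matrix

private lemma re_dot_aux {n : ℕ} (M : Matrix (Fin n) (Fin n) ℝ) (v : Fin n → ℂ) :
    (star v ⬝ᵥ (M.map Complex.ofReal) *ᵥ v).re =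
      (fun i => (v i).re) ⬝ᵥ M *ᵥ (fun i => (v i).re)
        + (fun i => (v i).im) ⬝ᵥ M *ᵥ (fun i => (v i).im) := by
  simp only [dotProduct, mulVec, map_apply, Pi.star_apply, Complex.star_def, Complex.re_sum,
    Complex.mul_re, Complex.mul_im, Complex.conj_re, Complex.conj_im, Complex.im_sum,
    Finset.mul_sum, ← Finset.sum_add_distrib, Complex.ofReal_re, Complex.ofReal_im]
  congr 1; ext i; congr 1; ext j; ring

private lemma pos_re_dot {n : ℕ} {M : Matrix (Fin n) (Fin n) ℝ} (hM : M.PosDef)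
    {v : Fin n → ℂ} (hv : v ≠ 0) :
    0 < (star v ⬝ᵥ (M.map Complex.ofReal) *ᵥ v).re := by
  rw [re_dot_aux]
  set r : Fin n → ℝ := fun i => (v i).re
  set s : Fin n → ℝ := fun i => (v i).im
  have h : r ≠ 0 ∨ s ≠ 0 := by
    by_contra h
    push_neg at h
    apply hv
    funext i
    have hr := congr_fun h.1 i
    have hs := congr_fun h.2 i
    exact Complex.ext hr hs
  have hr2 : 0 ≤ r ⬝ᵥ M *ᵥ r := hM.posSemidef.dotProduct_mulVec_nonneg r
  have hs2 : 0 ≤ s ⬝ᵥ M *ᵥ s := hM.posSemidef.dotProduct_mulVec_nonneg s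
  rcases h with h | h
  · have := hM.dotProduct_mulVec_pos h
    simp only [star_trivial] at this hr2 hs2 ⊢
    linarith
  · have := hM.dotProduct_mulVec_pos h
    simp only [star_trivial] at this hr2 hs2 ⊢
    linarith

/-- If `E` is symmetric positive definite and `A + Aᵀ` is negative definite
(the system `(E, A)` is dissipative), then every eigenvalue of the matrix
pencil `(E, A)` has negative real part. -/
theorem stmt_0 {n : ℕ} (hn : 1 ≤ n) (E A : Matrix (Fin n) (Fin n) ℝ)
    (hE : E.PosDef) (hA : (-(A + Aᵀ)).PosDef) :
    ∀ lam : ℂ,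
      (lam • E.map (Complex.ofReal) - A.map (Complex.ofReal)).det = 0 →
      lam.re < 0 := by
  intro lam hdet
  obtain ⟨v, hv, hv0⟩ := (Matrix.exists_mulVec_eq_zero_iff).mpr hdet
  set Ec := E.map Complex.ofReal with hEc
  set Ac := A.map Complex.ofReal with hAc
  have hker : lam • (Ec *ᵥ v) = Ac *ᵥ v := by
    rw [← smul_mulVec, ← sub_eq_zero, ← sub_mulVec]
    exact hv0
  have heq : lam * (star v ⬝ᵥ Ec *ᵥ v) = star v ⬝ᵥ Ac *ᵥ v := by
    rw [← hker]
    simp [dotProduct, Finset.mul_sum]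
    apply Finset.sum_congr rfl
    intro i _
    ring
  set e := star v ⬝ᵥ Ec *ᵥ v with he
  set a := star v ⬝ᵥ Ac *ᵥ v with ha
  -- e is real and positive
  have hEre : 0 < e.re := pos_re_dot hE hv
  have hEherm : Ec.IsHermitian := hE.isHermitian.map Complex.ofReal
    (fun x => by simp [Complex.conj_ofReal])
  have hEim : e.im = 0 := by
    have hconj : (starRingEnd ℂ) e = e := by
      calc (starRingEnd ℂ) e = star (Ec *ᵥ v) ⬝ᵥ star (star v) := by
            rw [star_dotProduct_star]; rfl
        _ = (star v ᵥ* Ecᴴ) ⬝ᵥ v := by rw [star_mulVec, star_star]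
        _ = star v ⬝ᵥ Ecᴴ *ᵥ v := (dotProduct_mulVec _ _ _).symm
        _ = e := by rw [hEherm.eq]
    exact Complex.conj_eq_iff_im.mp hconj
  -- real part of a is negative
  have hAre : a.re < 0 := by
    have h1 : 0 < (star v ⬝ᵥ ((-(A + Aᵀ)).map Complex.ofReal) *ᵥ v).re :=
      pos_re_dot hA hv
    rw [re_dot_aux] at h1
    have h2 := re_dot_aux A v
    have h3 := re_dot_aux Aᵀ v
    set r : Fin n → ℝ := fun i => (v i).re
    set s : Fin n → ℝ := fun i => (v i).im
    have hT : r ⬝ᵥ Aᵀ *ᵥ r = r ⬝ᵥ A *ᵥ r := by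
      rw [dotProduct_mulVec, vecMul_transpose, dotProduct_comm]
    have hT' : s ⬝ᵥ Aᵀ *ᵥ s = s ⬝ᵥ A *ᵥ s := by
      rw [dotProduct_mulVec, vecMul_transpose, dotProduct_comm]
    have hsum : r ⬝ᵥ (-(A + Aᵀ)) *ᵥ r + s ⬝ᵥ (-(A + Aᵀ)) *ᵥ s
        = -2 * (r ⬝ᵥ A *ᵥ r + s ⬝ᵥ A *ᵥ s) := by
      simp only [neg_mulVec, add_mulVec, dotProduct_neg, dotProduct_add, hT, hT']
      ring
    rw [hsum] at h1
    rw [h2]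
    nlinarith
  -- conclude
  have hre : lam.re * e.re - lam.im * e.im = a.re := by
    have := congrArg Complex.re heq
    simpa [Complex.mul_re] using this
  rw [hEim, mul_zero, sub_zero] at hre
  by_contra h
  push_neg at h
  nlinarith
end

section
/- Let E, A ∈ ℝ^{n×n} with E symmetric positive definite and A + Aᵀ negative definite, and let V ∈ ℝ^{n×r} have full column rank r (1 ≤ r ≤ n). Then the Galerkin-reduced matrices Ē = Vᵀ E V and Ā = Vᵀ A V satisfy: Ē is symmetric positive definite, Ā + Āᵀ is negative definite, and consequently every eigenvalue λ ∈ ℂ of the reduced matrix pencil (Ē, Ā) (i.e., every λ with det(λ·Ē − Ā) = 0 over ℂ) has negative real part. -/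
open Matrix

lemma aux_quad_re {r : ℕ} (P : Matrix (Fin r) (Fin r) ℝ) (z : Fin r → ℂ) :
    (star z ⬝ᵥ (P.map (Complex.ofReal)) *ᵥ z).re
      = (fun i => (z i).re) ⬝ᵥ P *ᵥ (fun i => (z i).re)
        + (fun i => (z i).im) ⬝ᵥ P *ᵥ (fun i => (z i).im) := by
  simp only [dotProduct, mulVec, map_apply, Pi.star_apply, Finset.mul_sum,
    Complex.re_sum, ← Finset.sum_add_distrib]
  refine Finset.sum_congr rfl fun i _ => ?_
  refine Finset.sum_congr rfl fun j _ => ?_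
  simp only [Complex.star_def, Complex.mul_re, Complex.mul_im, Complex.conj_re,
    Complex.conj_im, Complex.ofReal_re, Complex.ofReal_im]
  ring

lemma aux_quad_im {r : ℕ} (P : Matrix (Fin r) (Fin r) ℝ) (z : Fin r → ℂ) :
    (star z ⬝ᵥ (P.map (Complex.ofReal)) *ᵥ z).im
      = (fun i => (z i).re) ⬝ᵥ P *ᵥ (fun i => (z i).im)
        - (fun i => (z i).im) ⬝ᵥ P *ᵥ (fun i => (z i).re) := by
  simp only [dotProduct, mulVec, map_apply, Pi.star_apply, Finset.mul_sum,
    Complex.im_sum, ← Finset.sum_sub_distrib]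
  refine Finset.sum_congr rfl fun i _ => ?_
  refine Finset.sum_congr rfl fun j _ => ?_
  simp only [Complex.star_def, Complex.mul_re, Complex.mul_im, Complex.conj_re,
    Complex.conj_im, Complex.ofReal_re, Complex.ofReal_im]
  ring

lemma aux_congr_posDef {n r : ℕ} (M : Matrix (Fin n) (Fin n) ℝ) (hM : M.PosDef)
    (V : Matrix (Fin n) (Fin r) ℝ) (hVinj : ∀ v, V *ᵥ v = 0 → v = 0) :
    (Vᵀ * M * V).PosDef := by
  have hVH : Vᴴ = Vᵀ := by ext i j; simp [conjTranspose_apply]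
  refine posDef_iff_dotProduct_mulVec.mpr ⟨?_, ?_⟩
  · have := isHermitian_conjTranspose_mul_mul V hM.1
    rwa [hVH] at this
  · intro x hx
    have hVx : V *ᵥ x ≠ 0 := fun h0 => hx (hVinj x h0)
    have h := hM.dotProduct_mulVec_pos hVx
    have hs : star x = x := by ext i; simp
    have hsv : star (V *ᵥ x) = V *ᵥ x := by ext i; simp
    calc (0:ℝ) < star (V *ᵥ x) ⬝ᵥ M *ᵥ (V *ᵥ x) := h
    _ = star x ⬝ᵥ (Vᵀ * M * V) *ᵥ x := by
        rw [hsv, hs, ← mulVec_mulVec, ← mulVec_mulVec, dotProduct_mulVec x,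
          vecMul_transpose]

lemma aux_symm_quad {r : ℕ} (N : Matrix (Fin r) (Fin r) ℝ) (x : Fin r → ℝ) :
    x ⬝ᵥ Nᵀ *ᵥ x = x ⬝ᵥ N *ᵥ x := by
  rw [dotProduct_mulVec, vecMul_transpose, dotProduct_comm]

lemma aux_neg_quad {r : ℕ} (N : Matrix (Fin r) (Fin r) ℝ) (hN : (-(N + Nᵀ)).PosDef)
    (x : Fin r → ℝ) : (x ≠ 0 → x ⬝ᵥ N *ᵥ x < 0) ∧ x ⬝ᵥ N *ᵥ x ≤ 0 := by
  have hs : star x = x := by ext i; simp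
  have key : x ⬝ᵥ (-(N + Nᵀ)) *ᵥ x = -(x ⬝ᵥ N *ᵥ x + x ⬝ᵥ N *ᵥ x) := by
    rw [neg_mulVec, dotProduct_neg, add_mulVec, dotProduct_add, aux_symm_quad]
  constructor
  · intro hx
    have := hN.dotProduct_mulVec_pos hx
    rw [hs, key] at this
    linarith
  · have := hN.posSemidef.dotProduct_mulVec_nonneg x
    rw [hs, key] at this
    linarith

/-- Galerkin-type reduction of a dissipative system is dissipative, hence the
reduced matrix pencil has only eigenvalues with negative real part. -/
theorem stmt_2 {n r : ℕ} (hr : 1 ≤ r) (hrn : r ≤ n)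
    (E A : Matrix (Fin n) (Fin n) ℝ)
    (hE : E.PosDef) (hA : (-(A + Aᵀ)).PosDef)
    (V : Matrix (Fin n) (Fin r) ℝ) (hV : V.rank = r) :
    (Vᵀ * E * V).PosDef ∧
    (-((Vᵀ * A * V) + (Vᵀ * A * V)ᵀ)).PosDef ∧
    ∀ lam : ℂ,
      (lam • (Vᵀ * E * V).map (Complex.ofReal)
        - (Vᵀ * A * V).map (Complex.ofReal)).det = 0 →
      lam.re < 0 := by
  have hVinj : ∀ v, V *ᵥ v = 0 → v = 0 := by
    rw [← Matrix.ker_mulVecLin_eq_bot_iff]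
    have h1 := LinearMap.finrank_range_add_finrank_ker V.mulVecLin
    rw [Matrix.rank] at hV
    rw [hV] at h1
    simp only [Module.finrank_pi, Fintype.card_fin] at h1
    exact Submodule.finrank_eq_zero.mp (by omega)
  have hEr : (Vᵀ * E * V).PosDef := aux_congr_posDef E hE V hVinj
  have heq : -((Vᵀ * A * V) + (Vᵀ * A * V)ᵀ) = Vᵀ * (-(A + Aᵀ)) * V := by
    simp only [transpose_mul, transpose_transpose, Matrix.mul_add, Matrix.add_mul,
      Matrix.neg_mul, Matrix.mul_neg, Matrix.mul_assoc, neg_add]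
  have hAr : (-((Vᵀ * A * V) + (Vᵀ * A * V)ᵀ)).PosDef := by
    rw [heq]; exact aux_congr_posDef _ hA V hVinj
  refine ⟨hEr, hAr, ?_⟩
  intro lam hdet
  set M := Vᵀ * E * V with hMdef
  set N := Vᵀ * A * V with hNdef
  obtain ⟨z, hz, hzv⟩ := Matrix.exists_mulVec_eq_zero_iff.mpr hdet
  have h0 : lam * (star z ⬝ᵥ (M.map Complex.ofReal) *ᵥ z)
      = star z ⬝ᵥ (N.map Complex.ofReal) *ᵥ z := by
    have := congrArg (fun w => star z ⬝ᵥ w) hzv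
    simpa [sub_mulVec, smul_mulVec, dotProduct_sub, dotProduct_smul,
      sub_eq_zero, smul_eq_mul] using this
  set x : Fin r → ℝ := fun i => (z i).re with hxdef
  set y : Fin r → ℝ := fun i => (z i).im with hydef
  have hMsymm : Mᵀ = M := by
    have h1 := hEr.1
    ext i j
    have := congrFun (congrFun h1 i) j
    simpa [conjTranspose_apply] using this
  -- qM properties
  have hqMre : (star z ⬝ᵥ (M.map Complex.ofReal) *ᵥ z).re = x ⬝ᵥ M *ᵥ x + y ⬝ᵥ M *ᵥ y :=
    aux_quad_re M z
  have hqMim : (star z ⬝ᵥ (M.map Complex.ofReal) *ᵥ z).im = 0 := by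
    rw [aux_quad_im M z]
    have : y ⬝ᵥ M *ᵥ x = x ⬝ᵥ M *ᵥ y := by
      rw [dotProduct_mulVec]
      conv_lhs => rw [← hMsymm]
      rw [vecMul_transpose, dotProduct_comm]
    rw [← hxdef, ← hydef, this]; ring
  have hqNre : (star z ⬝ᵥ (N.map Complex.ofReal) *ᵥ z).re = x ⬝ᵥ N *ᵥ x + y ⬝ᵥ N *ᵥ y :=
    aux_quad_re N z
  -- one of x, y nonzero
  have hxy : x ≠ 0 ∨ y ≠ 0 := by
    by_contra hc
    push_neg at hc
    apply hz
    ext i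
    have h1 : x i = 0 := by rw [hc.1]; rfl
    have h2 : y i = 0 := by rw [hc.2]; rfl
    exact Complex.ext h1 h2
  have hMx := (aux_congr_posDef E hE V hVinj).posSemidef
  have hMxle : ∀ v : Fin r → ℝ, 0 ≤ v ⬝ᵥ M *ᵥ v := by
    intro v
    have := hMx.dotProduct_mulVec_nonneg v
    have hs : star v = v := by ext i; simp
    rwa [hs] at this
  have hMpos : 0 < (star z ⬝ᵥ (M.map Complex.ofReal) *ᵥ z).re := by
    rw [hqMre]
    rcases hxy with h | h
    · have h1 := hEr.dotProduct_mulVec_pos h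
      have hs : star x = x := by ext i; simp
      rw [hs] at h1
      have := hMxle y
      linarith
    · have h1 := hEr.dotProduct_mulVec_pos h
      have hs : star y = y := by ext i; simp
      rw [hs] at h1
      have := hMxle x
      linarith
  have hNneg : (star z ⬝ᵥ (N.map Complex.ofReal) *ᵥ z).re < 0 := by
    rw [hqNre]
    rcases hxy with h | h
    · have h1 := (aux_neg_quad N hAr x).1 h
      have h2 := (aux_neg_quad N hAr y).2
      linarith
    · have h1 := (aux_neg_quad N hAr y).1 h
      have h2 := (aux_neg_quad N hAr x).2
      linarith
  have hre := congrArg Complex.re h0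
  rw [Complex.mul_re, hqMim] at hre
  simp only [mul_zero, sub_zero] at hre
  nlinarith [hMpos, hNneg, hre]
end

section
/- Let (𝓜, 𝔉, P) be a probability space, let Φ₁, …, Φ_m : 𝓜 → ℝ be square-integrable functions such that for every nonzero z ∈ ℝ^m the function Σ_{i=1}^m z_i Φ_i is nonzero on a set of positive P-measure, and let E : 𝓜 → ℝ^{n×n} be measurable with all entries of μ ↦ Φ_i(μ)Φ_j(μ)E(μ) integrable for all i, j, such that E(μ) is symmetric positive definite for P-almost every μ. Then the block matrix Ê ∈ ℝ^{mn×mn} whose (i,j)-th n×n block is Ê_{ij} = 𝔼[Φ_i Φ_j E] = ∫ Φ_i(μ) Φ_j(μ) E(μ) dP(μ) is symmetric positive definite. -/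
open Matrix MeasureTheory

/-- If `E(μ)` is symmetric positive definite for almost every `μ`, then its
stochastic Galerkin projection `Ê`, the block matrix with `(i,j)`-th block
`𝔼[Φᵢ Φⱼ E]`, is symmetric positive definite. -/
theorem stmt_5 {Ω : Type*} [MeasurableSpace Ω] (P : Measure Ω)
    [IsProbabilityMeasure P] {m n : ℕ}
    (Φ : Fin m → Ω → ℝ) (hΦ : ∀ i, MemLp (Φ i) 2 P)
    (hind : ∀ z : Fin m → ℝ, z ≠ 0 →
      0 < P {ω | (∑ i, z i * Φ i ω) ≠ 0})
    (E : Ω → Matrix (Fin n) (Fin n) ℝ)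
    (hmeas : ∀ a b : Fin n, Measurable fun ω => E ω a b)
    (hint : ∀ i j : Fin m, ∀ a b : Fin n,
      Integrable (fun ω => Φ i ω * Φ j ω * E ω a b) P)
    (hposdef : ∀ᵐ ω ∂P, (E ω).PosDef) :
    (Matrix.of (fun p q : Fin m × Fin n =>
      ∫ ω, Φ p.1 ω * Φ q.1 ω * E ω p.2 q.2 ∂P)).PosDef := by
  rw [posDef_iff_dotProduct_mulVec]
  constructor
  · -- Hermitian
    ext p q
    simp only [conjTranspose_apply, of_apply, star_trivial]
    refine integral_congr_ae ?_
    filter_upwards [hposdef] with ω hω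
    have hsym : E ω q.2 p.2 = E ω p.2 q.2 := by
      conv_lhs => rw [← hω.isHermitian]
      simp [conjTranspose_apply]
    rw [hsym]; ring
  · intro x hx
    -- v ω : the random vector
    set v : Ω → Fin n → ℝ := fun ω a => ∑ i, x (i, a) * Φ i ω with hv
    set g : Ω → ℝ := fun ω => ∑ p : Fin m × Fin n, ∑ q : Fin m × Fin n,
      x p * x q * (Φ p.1 ω * Φ q.1 ω * E ω p.2 q.2) with hg
    -- g equals the quadratic form of E ω at v ω
    have hgq : ∀ ω, g ω = star (v ω) ⬝ᵥ (E ω *ᵥ v ω) := by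
      intro ω
      let e : (Fin n × Fin n) × (Fin m × Fin m) ≃ (Fin m × Fin n) × (Fin m × Fin n) :=
        ⟨fun s => ((s.2.2, s.1.1), (s.2.1, s.1.2)),
         fun r => ((r.1.2, r.2.2), (r.2.1, r.1.1)), fun s => rfl, fun r => rfl⟩
      calc g ω = ∑ r : (Fin m × Fin n) × (Fin m × Fin n),
            x r.1 * x r.2 * (Φ r.1.1 ω * Φ r.2.1 ω * E ω r.1.2 r.2.2) := by
              simp only [hg]
              exact (Fintype.sum_prod_type' (f := fun p q : Fin m × Fin n =>
                x p * x q * (Φ p.1 ω * Φ q.1 ω * E ω p.2 q.2))).symm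
        _ = ∑ s : (Fin n × Fin n) × (Fin m × Fin m),
            x (s.2.2, s.1.1) * x (s.2.1, s.1.2) *
              (Φ s.2.2 ω * Φ s.2.1 ω * E ω s.1.1 s.1.2) :=
              (Fintype.sum_equiv e
                (fun s => x (s.2.2, s.1.1) * x (s.2.1, s.1.2) *
                  (Φ s.2.2 ω * Φ s.2.1 ω * E ω s.1.1 s.1.2))
                (fun r => x r.1 * x r.2 * (Φ r.1.1 ω * Φ r.2.1 ω * E ω r.1.2 r.2.2))
                (fun s => rfl)).symm
        _ = star (v ω) ⬝ᵥ (E ω *ᵥ v ω) := by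
              simp only [star_trivial, dotProduct, mulVec, dotProduct, hv,
                Fintype.sum_prod_type, Finset.sum_mul, Finset.mul_sum]
              refine Finset.sum_congr rfl fun a _ => ?_
              refine Finset.sum_congr rfl fun b _ => ?_
              refine Finset.sum_congr rfl fun i _ => ?_
              refine Finset.sum_congr rfl fun j _ => ?_
              ring
    -- integrability of g
    have hgi : Integrable g P := by
      apply integrable_finset_sum
      intro p _
      apply integrable_finset_sum
      intro q _
      exact ((hint p.1 q.1 p.2 q.2).const_mul _)
    -- a.e. nonneg
    have hnonneg : 0 ≤ᵐ[P] g := by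
      filter_upwards [hposdef] with ω hω
      rw [Pi.zero_apply, hgq ω]
      exact hω.posSemidef.dotProduct_mulVec_nonneg (v ω)
    -- the set of positive measure
    obtain ⟨⟨i₀, a₀⟩, hx0⟩ := Function.ne_iff.mp hx
    set z : Fin m → ℝ := fun i => x (i, a₀) with hz
    have hzne : z ≠ 0 := fun h => hx0 (congrFun h i₀)
    set S : Set Ω := {ω | (∑ i, z i * Φ i ω) ≠ 0} with hS
    have hSpos : 0 < P S := hind z hzne
    set G : Set Ω := {ω | (E ω).PosDef} with hG
    have hGc : P Gᶜ = 0 := by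
      simp only [hG, Set.compl_setOf]
      exact ae_iff.mp hposdef
    -- on S ∩ G, g is positive
    have hsub : S ∩ G ⊆ Function.support g := by
      rintro ω ⟨hωS, hωG⟩
      have hvne : v ω ≠ 0 := by
        intro h
        exact hωS (by simpa [hv, hz] using congrFun h a₀)
      have : 0 < g ω := by
        rw [hgq ω]
        exact hωG.dotProduct_mulVec_pos hvne
      exact ne_of_gt this
    have hSG : 0 < P (S ∩ G) := by
      have h1 : P S ≤ P (S ∩ G) + P (S \ G) := measure_le_inter_add_diff P S G
      have h2 : P (S \ G) = 0 := measure_mono_null (fun ω h => h.2) hGc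
      rw [h2, add_zero] at h1
      exact lt_of_lt_of_le hSpos h1
    have hintpos : 0 < ∫ ω, g ω ∂P := by
      rw [integral_pos_iff_support_of_nonneg_ae hnonneg hgi]
      exact lt_of_lt_of_le hSG (measure_mono hsub)
    -- identify the quadratic form of the Galerkin matrix with ∫ g
    have hkey : star x ⬝ᵥ ((Matrix.of (fun p q : Fin m × Fin n =>
        ∫ ω, Φ p.1 ω * Φ q.1 ω * E ω p.2 q.2 ∂P)) *ᵥ x) = ∫ ω, g ω ∂P := by
      rw [integral_finset_sum _ (fun p _ => integrable_finset_sum _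
        (fun q _ => (hint p.1 q.1 p.2 q.2).const_mul _))]
      simp only [star_trivial, dotProduct, mulVec, dotProduct, of_apply, Finset.mul_sum]
      refine Finset.sum_congr rfl fun p _ => ?_
      rw [integral_finset_sum _ (fun q _ => (hint p.1 q.1 p.2 q.2).const_mul _)]
      refine Finset.sum_congr rfl fun q _ => ?_
      rw [integral_const_mul]
      ring
    rw [hkey]
    exact hintpos
end

section
/- Let (𝓜, 𝔉, P) be a probability space, let Φ₁, …, Φ_m : 𝓜 → ℝ be square-integrable functions such that for every nonzero z ∈ ℝ^m the function Σ_{i=1}^m z_i Φ_i is nonzero on a set of positive P-measure, and let E, A : 𝓜 → ℝ^{n×n} be measurable with all entries of Φ_i Φ_j E and Φ_i Φ_j A integrable. Suppose that for P-almost every μ, E(μ) is symmetric positive definite and A(μ) + A(μ)ᵀ is negative definite (the parameter-dependent system is dissipative almost everywhere). Then the stochastic Galerkin matrices Ê, Â ∈ ℝ^{mn×mn} with blocks Ê_{ij} = 𝔼[Φ_i Φ_j E] and Â_{ij} = 𝔼[Φ_i Φ_j A] satisfy: Ê is symmetric positive definite and Â + Âᵀ is negative definite; consequently, for any V ∈ ℝ^{mn×r}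 of full column rank, every eigenvalue λ ∈ ℂ of the reduced pencil (Vᵀ Ê V, Vᵀ Â V) (i.e., det(λ·Vᵀ Ê V − Vᵀ Â V) = 0 over ℂ) satisfies Re(λ) < 0. -/
open Matrix MeasureTheory
open scoped ComplexOrder

section Helpers

lemma mulVec_inj_of_rank {ι : Type*} [Fintype ι] {r : ℕ} (V : Matrix ι (Fin r) ℝ) (hV : V.rank = r) :
    ∀ x : Fin r → ℝ, x ≠ 0 → V *ᵥ x ≠ 0 := by
  intro x hx hVx
  have h1 := V.mulVecLin.finrank_range_add_finrank_ker
  have hrk : Module.finrank ℝ (LinearMap.range V.mulVecLin) = r := hV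
  rw [hrk, Module.finrank_fintype_fun_eq_card, Fintype.card_fin] at h1
  have hker : Module.finrank ℝ (LinearMap.ker V.mulVecLin) = 0 := by omega
  have : LinearMap.ker V.mulVecLin = ⊥ := Submodule.finrank_eq_zero.mp hker
  exact hx (by simpa [this] using (LinearMap.mem_ker.mpr (show V.mulVecLin x = 0 from hVx)))

lemma conj_quad {k : ℕ} (B : Matrix (Fin k) (Fin k) ℝ) (v : Fin k → ℂ) :
    (starRingEnd ℂ) (star v ⬝ᵥ ((B.map Complex.ofReal) *ᵥ v))
      = star v ⬝ᵥ ((Bᵀ.map Complex.ofReal) *ᵥ v) := by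
  simp only [dotProduct, mulVec, map_apply, Pi.star_apply, transpose_apply, RCLike.star_def,
    map_sum, Finset.mul_sum]
  rw [Finset.sum_comm]
  exact Finset.sum_congr rfl fun i _ => Finset.sum_congr rfl fun j _ => by
    simp [_root_.map_mul, Complex.conj_ofReal]; ring

lemma re_quad {k : ℕ} (B : Matrix (Fin k) (Fin k) ℝ) (v : Fin k → ℂ) :
    (star v ⬝ᵥ ((B.map Complex.ofReal) *ᵥ v)).re
      = (fun i => (v i).re) ⬝ᵥ (B *ᵥ fun i => (v i).re)
        + (fun i => (v i).im) ⬝ᵥ (B *ᵥ fun i => (v i).im) := by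
  simp only [dotProduct, mulVec, map_apply, Pi.star_apply, RCLike.star_def,
    Finset.mul_sum, Complex.re_sum, Complex.mul_re, Complex.mul_im,
    Complex.conj_re, Complex.conj_im, Complex.ofReal_re, Complex.ofReal_im]
  rw [← Finset.sum_add_distrib]
  refine Finset.sum_congr rfl fun i _ => ?_
  rw [← Finset.sum_add_distrib]
  exact Finset.sum_congr rfl fun j _ => by ring

lemma posDef_map_complex {k : ℕ} {M : Matrix (Fin k) (Fin k) ℝ} (hM : M.PosDef) :
    (M.map (Complex.ofReal)).PosDef := by
  have hMsym : Mᵀ = M := by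
    ext i j
    simpa [conjTranspose_apply] using congrFun (congrFun hM.1 i) j
  refine PosDef.of_dotProduct_mulVec_pos ?_ ?_
  · ext i j
    have h1 : M j i = M i j := congrFun (congrFun hMsym i) j
    simp [conjTranspose_apply, map_apply, Complex.conj_ofReal, h1]
  · intro v hv
    have him : (star v ⬝ᵥ ((M.map Complex.ofReal) *ᵥ v)).im = 0 := by
      have hc := conj_quad M v
      rw [hMsym] at hc
      have := congrArg Complex.im hc
      simp only [Complex.conj_im] at this
      linarith
    have hre : 0 < (star v ⬝ᵥ ((M.map Complex.ofReal) *ᵥ v)).re := by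
      rw [re_quad]
      set a : Fin k → ℝ := fun i => (v i).re with ha
      set b : Fin k → ℝ := fun i => (v i).im with hb
      have hab : a ≠ 0 ∨ b ≠ 0 := by
        by_contra h
        push_neg at h
        apply hv
        funext i
        have h1 : (v i).re = 0 := congrFun h.1 i
        have h2 : (v i).im = 0 := congrFun h.2 i
        exact Complex.ext h1 h2
      have hsa : 0 ≤ a ⬝ᵥ (M *ᵥ a) := by simpa using hM.posSemidef.dotProduct_mulVec_nonneg a
      have hsb : 0 ≤ b ⬝ᵥ (M *ᵥ b) := by simpa using hM.posSemidef.dotProduct_mulVec_nonneg b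
      rcases hab with h | h
      · have : 0 < a ⬝ᵥ (M *ᵥ a) := by simpa using hM.dotProduct_mulVec_pos h
        linarith
      · have : 0 < b ⬝ᵥ (M *ᵥ b) := by simpa using hM.dotProduct_mulVec_pos h
        linarith
    rw [Complex.lt_def]
    exact ⟨by simpa using hre, by simpa using him.symm⟩

lemma posDef_conj_rank {ι : Type*} [Fintype ι] [DecidableEq ι] {r : ℕ}
    {M : Matrix ι ι ℝ} (hM : M.PosDef)
    (V : Matrix ι (Fin r) ℝ) (hV : V.rank = r) : (Vᵀ * M * V).PosDef := by
  have hVt : Vᴴ = Vᵀ := by ext i j; simp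
  refine PosDef.of_dotProduct_mulVec_pos ?_ ?_
  · rw [← hVt]
    exact isHermitian_conjTranspose_mul_mul V hM.1
  · intro x hx
    have h0 := hM.dotProduct_mulVec_pos (mulVec_inj_of_rank V hV x hx)
    simp only [star_trivial] at h0 ⊢
    have hmv : (Vᵀ * M * V) *ᵥ x = Vᵀ *ᵥ (M *ᵥ (V *ᵥ x)) := by
      rw [← mulVec_mulVec, ← mulVec_mulVec]
    rw [hmv, dotProduct_mulVec, vecMul_transpose]
    exact h0

lemma galerkin_posDef {Ω : Type*} [MeasurableSpace Ω] (P : Measure Ω)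
    [IsProbabilityMeasure P] {m n : ℕ}
    (Φ : Fin m → Ω → ℝ)
    (hind : ∀ z : Fin m → ℝ, z ≠ 0 → 0 < P {ω | (∑ i, z i * Φ i ω) ≠ 0})
    (M : Ω → Matrix (Fin n) (Fin n) ℝ)
    (hint : ∀ i j : Fin m, ∀ a b : Fin n,
      Integrable (fun ω => Φ i ω * Φ j ω * M ω a b) P)
    (hpd : ∀ᵐ ω ∂P, (M ω).PosDef) :
    (Matrix.of (fun p q : Fin m × Fin n =>
        ∫ ω, Φ p.1 ω * Φ q.1 ω * M ω p.2 q.2 ∂P)).PosDef := by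
  refine PosDef.of_dotProduct_mulVec_pos ?_ ?_
  · ext p q
    simp only [conjTranspose_apply, of_apply, star_trivial]
    refine integral_congr_ae ?_
    filter_upwards [hpd] with ω hω
    have hsym : M ω q.2 p.2 = M ω p.2 q.2 := by
      have := congrFun (congrFun hω.1 q.2) p.2
      simpa [conjTranspose_apply] using this.symm
    rw [hsym]; ring
  · intro x hx
    set f : Ω → ℝ := fun ω => ∑ s : (Fin m × Fin n) × (Fin m × Fin n),
      x s.1 * x s.2 * (Φ s.1.1 ω * Φ s.2.1 ω * M ω s.1.2 s.2.2) with hf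
    have hfint : Integrable f P := by
      refine integrable_finset_sum _ fun s _ => ?_
      exact ((hint s.1.1 s.2.1 s.1.2 s.2.2).const_mul _)
    have hquad : dotProduct (star x)
        ((Matrix.of (fun p q : Fin m × Fin n =>
          ∫ ω, Φ p.1 ω * Φ q.1 ω * M ω p.2 q.2 ∂P)) *ᵥ x) = ∫ ω, f ω ∂P := by
      rw [hf, integral_finset_sum _ fun s _ => ((hint s.1.1 s.2.1 s.1.2 s.2.2).const_mul _)]
      simp only [dotProduct, mulVec, of_apply, star_trivial, Finset.mul_sum]
      rw [← Finset.sum_product']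
      refine Finset.sum_congr rfl fun s _ => ?_
      rw [show (fun a => x s.1 * x s.2 * (Φ s.1.1 a * Φ s.2.1 a * M a s.1.2 s.2.2))
        = fun a => (x s.1 * x s.2) * (Φ s.1.1 a * Φ s.2.1 a * M a s.1.2 s.2.2) from rfl,
        MeasureTheory.integral_const_mul]
      ring
    rw [hquad]
    have hfy : ∀ ω, f ω = dotProduct (fun a => ∑ i, x (i, a) * Φ i ω)
        (M ω *ᵥ (fun a => ∑ i, x (i, a) * Φ i ω)) := by
      intro ω
      simp only [hf, dotProduct, mulVec, Fintype.sum_prod_type, Finset.sum_mul,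
        Finset.mul_sum]
      refine Finset.sum_comm.trans (Finset.sum_congr rfl fun a _ => ?_)
      refine (Finset.sum_congr rfl fun i _ => Finset.sum_comm).trans ?_
      refine Finset.sum_comm.trans ?_
      refine Finset.sum_congr rfl fun b _ => Finset.sum_comm.trans ?_
      exact Finset.sum_congr rfl fun j _ => Finset.sum_congr rfl fun i _ => by ring
    have hnn : 0 ≤ᵐ[P] f := by
      filter_upwards [hpd] with ω hω
      rw [Pi.zero_apply, hfy ω]
      simpa using hω.posSemidef.dotProduct_mulVec_nonneg (fun a => ∑ i, x (i, a) * Φ i ω)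
    rw [integral_pos_iff_support_of_nonneg_ae hnn hfint]
    obtain ⟨p0, hp0⟩ : ∃ p, x p ≠ 0 := Function.ne_iff.mp hx
    set z : Fin m → ℝ := fun i => x (i, p0.2) with hz
    have hzne : z ≠ 0 := by
      intro h
      exact hp0 (by simpa [hz] using congrFun h p0.1)
    have hS : 0 < P {ω | (∑ i, z i * Φ i ω) ≠ 0} := hind z hzne
    set T : Set Ω := {ω | (M ω).PosDef} with hT
    have hTc : P Tᶜ = 0 := by
      simpa [hT, Set.compl_setOf] using (MeasureTheory.ae_iff.mp hpd)
    have hsub : {ω | (∑ i, z i * Φ i ω) ≠ 0} ∩ T ⊆ Function.support f := by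
      rintro ω ⟨hω1, hω2⟩
      have hy : (fun a => ∑ i, x (i, a) * Φ i ω) ≠ 0 := by
        intro h
        apply hω1
        simpa [hz] using congrFun h p0.2
      have h2 := hω2.dotProduct_mulVec_pos hy
      simp only [star_trivial] at h2
      rw [Function.mem_support, hfy ω]
      exact ne_of_gt h2
    have h1 : P {ω | (∑ i, z i * Φ i ω) ≠ 0} ≤
        P ({ω | (∑ i, z i * Φ i ω) ≠ 0} ∩ T) := by
      calc P {ω | (∑ i, z i * Φ i ω) ≠ 0}
          ≤ P (({ω | (∑ i, z i * Φ i ω) ≠ 0} ∩ T) ∪ Tᶜ) := by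
            refine measure_mono fun ω hω => ?_
            by_cases h : ω ∈ T
            · exact Or.inl ⟨hω, h⟩
            · exact Or.inr h
        _ ≤ P ({ω | (∑ i, z i * Φ i ω) ≠ 0} ∩ T) + P Tᶜ := measure_union_le _ _
        _ = P ({ω | (∑ i, z i * Φ i ω) ≠ 0} ∩ T) := by rw [hTc, add_zero]
    exact lt_of_lt_of_le (lt_of_lt_of_le hS h1) (measure_mono hsub)

end Helpers

set_option maxHeartbeats 1000000 in
/-- If the parameter-dependent system `(E(μ), A(μ))` is dissipative almost
everywhere, then the stochastic Galerkin system `(Ê, Â)` is dissipative, and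
any Galerkin-type reduction with a full-column-rank projection matrix `V`
yields a pencil whose eigenvalues all have negative real part. -/
theorem stmt_6 {Ω : Type*} [MeasurableSpace Ω] (P : Measure Ω)
    [IsProbabilityMeasure P] {m n : ℕ}
    (Φ : Fin m → Ω → ℝ) (hΦ : ∀ i, MemLp (Φ i) 2 P)
    (hind : ∀ z : Fin m → ℝ, z ≠ 0 →
      0 < P {ω | (∑ i, z i * Φ i ω) ≠ 0})
    (E A : Ω → Matrix (Fin n) (Fin n) ℝ)
    (hmeasE : ∀ a b : Fin n, Measurable fun ω => E ω a b)
    (hmeasA : ∀ a b : Fin n, Measurable fun ω => A ω a b)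
    (hintE : ∀ i j : Fin m, ∀ a b : Fin n,
      Integrable (fun ω => Φ i ω * Φ j ω * E ω a b) P)
    (hintA : ∀ i j : Fin m, ∀ a b : Fin n,
      Integrable (fun ω => Φ i ω * Φ j ω * A ω a b) P)
    (hdiss : ∀ᵐ ω ∂P, (E ω).PosDef ∧ (-(A ω + (A ω)ᵀ)).PosDef) :
    (Matrix.of (fun p q : Fin m × Fin n =>
        ∫ ω, Φ p.1 ω * Φ q.1 ω * E ω p.2 q.2 ∂P)).PosDef ∧
    (-((Matrix.of (fun p q : Fin m × Fin n =>
          ∫ ω, Φ p.1 ω * Φ q.1 ω * A ω p.2 q.2 ∂P))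
        + (Matrix.of (fun p q : Fin m × Fin n =>
          ∫ ω, Φ p.1 ω * Φ q.1 ω * A ω p.2 q.2 ∂P))ᵀ)).PosDef ∧
    ∀ r : ℕ, ∀ V : Matrix (Fin m × Fin n) (Fin r) ℝ, V.rank = r →
      ∀ lam : ℂ,
        (lam • (Vᵀ * (Matrix.of (fun p q : Fin m × Fin n =>
              ∫ ω, Φ p.1 ω * Φ q.1 ω * E ω p.2 q.2 ∂P)) * V).map (Complex.ofReal)
          - (Vᵀ * (Matrix.of (fun p q : Fin m × Fin n =>
              ∫ ω, Φ p.1 ω * Φ q.1 ω * A ω p.2 q.2 ∂P)) * V).map (Complex.ofReal)).det = 0 →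
        lam.re < 0 := by
  set Ehat : Matrix (Fin m × Fin n) (Fin m × Fin n) ℝ :=
    Matrix.of (fun p q : Fin m × Fin n =>
      ∫ ω, Φ p.1 ω * Φ q.1 ω * E ω p.2 q.2 ∂P) with hEhat
  set Ahat : Matrix (Fin m × Fin n) (Fin m × Fin n) ℝ :=
    Matrix.of (fun p q : Fin m × Fin n =>
      ∫ ω, Φ p.1 ω * Φ q.1 ω * A ω p.2 q.2 ∂P) with hAhat
  have hE : Ehat.PosDef :=
    galerkin_posDef P Φ hind E hintE (hdiss.mono fun ω h => h.1)
  -- integrability for the dissipation matrix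
  have hintH : ∀ i j : Fin m, ∀ a b : Fin n,
      Integrable (fun ω => Φ i ω * Φ j ω * (-(A ω + (A ω)ᵀ)) a b) P := by
    intro i j a b
    refine (((hintA i j a b).add (hintA i j b a)).neg).congr ?_
    filter_upwards with ω
    simp only [Pi.neg_apply, Pi.add_apply, Matrix.neg_apply, Matrix.add_apply, transpose_apply]
    ring
  have hH : (Matrix.of (fun p q : Fin m × Fin n =>
      ∫ ω, Φ p.1 ω * Φ q.1 ω * (-(A ω + (A ω)ᵀ)) p.2 q.2 ∂P)).PosDef :=
    galerkin_posDef P Φ hind _ hintH (hdiss.mono fun ω h => h.2)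
  have hHeq : -(Ahat + Ahatᵀ) = Matrix.of (fun p q : Fin m × Fin n =>
      ∫ ω, Φ p.1 ω * Φ q.1 ω * (-(A ω + (A ω)ᵀ)) p.2 q.2 ∂P) := by
    ext p q
    simp only [Matrix.neg_apply, Matrix.add_apply, transpose_apply, of_apply, hAhat]
    rw [show (fun ω => Φ p.1 ω * Φ q.1 ω * -(A ω p.2 q.2 + A ω q.2 p.2))
      = fun ω => -((Φ p.1 ω * Φ q.1 ω * A ω p.2 q.2) + (Φ q.1 ω * Φ p.1 ω * A ω q.2 p.2))
      from funext fun ω => by ring]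
    rw [integral_neg, integral_add (hintA p.1 q.1 p.2 q.2) (hintA q.1 p.1 q.2 p.2)]
  have hA : (-(Ahat + Ahatᵀ)).PosDef := by rw [hHeq]; exact hH
  refine ⟨hE, hA, ?_⟩
  intro r V hV lam hdet
  -- reduced matrices
  set Er : Matrix (Fin r) (Fin r) ℝ := Vᵀ * Ehat * V with hEr
  set Ar : Matrix (Fin r) (Fin r) ℝ := Vᵀ * Ahat * V with hAr
  have hErpd : Er.PosDef := by rw [hEr]; exact posDef_conj_rank hE V hV
  have hHr : (-(Ar + Arᵀ)).PosDef := by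
    have heq : Vᵀ * (-(Ahat + Ahatᵀ)) * V = -(Ar + Arᵀ) := by
      rw [hAr]
      simp only [Matrix.neg_mul, Matrix.mul_neg, Matrix.add_mul, Matrix.mul_add,
        transpose_mul, transpose_transpose, Matrix.mul_assoc]
    rw [← heq]
    exact posDef_conj_rank hA V hV
  -- eigenvector
  obtain ⟨v, hvne, hmv⟩ : ∃ v ≠ 0,
      (lam • Er.map Complex.ofReal - Ar.map Complex.ofReal) *ᵥ v = 0 :=
    (Matrix.exists_mulVec_eq_zero_iff).mpr hdet
  have hmv' : lam • ((Er.map Complex.ofReal) *ᵥ v) = (Ar.map Complex.ofReal) *ᵥ v := by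
    have := sub_eq_zero.mp (by rwa [Matrix.sub_mulVec] at hmv)
    rwa [Matrix.smul_mulVec] at this
  set e : ℂ := star v ⬝ᵥ ((Er.map Complex.ofReal) *ᵥ v) with he
  set a : ℂ := star v ⬝ᵥ ((Ar.map Complex.ofReal) *ᵥ v) with ha
  have hepos : 0 < e := (posDef_map_complex hErpd).dotProduct_mulVec_pos hvne
  have heim : e.im = 0 := ((Complex.lt_def).mp hepos).2.symm
  have here : 0 < e.re := by simpa using ((Complex.lt_def).mp hepos).1
  have hlame : lam * e = a := by
    rw [he, ha, ← hmv', dotProduct_smul, smul_eq_mul]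
  -- real part of a is negative
  have hq : 0 < star v ⬝ᵥ (((-(Ar + Arᵀ)).map Complex.ofReal) *ᵥ v) :=
    (posDef_map_complex hHr).dotProduct_mulVec_pos hvne
  have hqeq : star v ⬝ᵥ (((-(Ar + Arᵀ)).map Complex.ofReal) *ᵥ v)
      = -(a + (starRingEnd ℂ) a) := by
    have hmap : (-(Ar + Arᵀ)).map Complex.ofReal
        = -(Ar.map Complex.ofReal + Arᵀ.map Complex.ofReal) := by
      ext i j; simp
    rw [hmap, Matrix.neg_mulVec, Matrix.add_mulVec, dotProduct_neg, dotProduct_add,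
      ← ha, conj_quad Ar v]
  have hare : a.re < 0 := by
    have h1 : 0 < (-(a + (starRingEnd ℂ) a)).re := by
      rw [← hqeq]
      exact ((Complex.lt_def).mp hq).1
    simp only [Complex.neg_re, Complex.add_re, Complex.conj_re] at h1
    linarith
  -- conclude
  have hee : e = (e.re : ℂ) := Complex.ext rfl (by simp [heim])
  have hre : lam.re * e.re = a.re := by
    have := congrArg Complex.re (hee ▸ hlame)
    simpa [Complex.mul_re, Complex.ofReal_re, Complex.ofReal_im] using this
  have : lam.re = a.re / e.re := by
    field_simp [ne_of_gt here] at hre ⊢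
    linarith [hre]
  rw [this]
  exact div_neg_of_neg_of_pos hare here
end

section
/- Let E, A ∈ ℝ^{n×n}, let M ∈ ℝ^{n×n} satisfy the Lyapunov equation Aᵀ M E + Eᵀ M A + I_n = 0, and let M̃ ∈ ℝ^{n×n} be symmetric with ‖M̃ − M‖ < 1 / (‖Aᵀ‖·‖E‖ + ‖A‖·‖Eᵀ‖), where ‖·‖ denotes the operator norm induced by the Euclidean vector norm. Then M̃ solves the Lyapunov inequality, i.e., the symmetric matrix Aᵀ M̃ E + Eᵀ M̃ A is negative definite. -/
open Matrix

/-- The operator norm of a square real matrix induced by the Euclidean vector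
norm (spectral norm). -/
noncomputable def l2OpNorm {n : ℕ} (M : Matrix (Fin n) (Fin n) ℝ) : ℝ :=
  ‖(Matrix.toEuclideanCLM (𝕜 := ℝ) M)‖

lemma l2OpNorm_nonneg {n : ℕ} (M : Matrix (Fin n) (Fin n) ℝ) : 0 ≤ l2OpNorm M :=
  norm_nonneg _

lemma l2OpNorm_mul_le {n : ℕ} (A B : Matrix (Fin n) (Fin n) ℝ) :
    l2OpNorm (A * B) ≤ l2OpNorm A * l2OpNorm B := by
  unfold l2OpNorm
  rw [_root_.map_mul]
  exact norm_mul_le _ _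

lemma l2OpNorm_mul3_le {n : ℕ} (A B C : Matrix (Fin n) (Fin n) ℝ) :
    l2OpNorm (A * B * C) ≤ l2OpNorm A * l2OpNorm B * l2OpNorm C :=
  le_trans (l2OpNorm_mul_le _ _)
    (mul_le_mul_of_nonneg_right (l2OpNorm_mul_le _ _) (l2OpNorm_nonneg _))

lemma quad_bound {n : ℕ} (R : Matrix (Fin n) (Fin n) ℝ) (x : Fin n → ℝ) :
    |x ⬝ᵥ (R *ᵥ x)| ≤ l2OpNorm R * (x ⬝ᵥ x) := by
  set x' : EuclideanSpace ℝ (Fin n) := (WithLp.equiv _ _).symm x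
  have h1 : x ⬝ᵥ (R *ᵥ x) = inner ℝ x' ((Matrix.toEuclideanCLM (𝕜 := ℝ) R) x') := by
    rw [EuclideanSpace.inner_eq_star_dotProduct]
    simp [x', Matrix.toLin'_apply, dotProduct_comm]
  have h2 : x ⬝ᵥ x = ‖x'‖ * ‖x'‖ := by
    rw [← real_inner_self_eq_norm_mul_norm, EuclideanSpace.inner_eq_star_dotProduct]
    simp [x']
  rw [h1, h2]
  calc |inner ℝ x' ((Matrix.toEuclideanCLM (𝕜 := ℝ) R) x')|
      ≤ ‖x'‖ * ‖(Matrix.toEuclideanCLM (𝕜 := ℝ) R) x'‖ := abs_real_inner_le_norm _ _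
    _ ≤ ‖x'‖ * (l2OpNorm R * ‖x'‖) := by
        gcongr; exact (Matrix.toEuclideanCLM (𝕜 := ℝ) R).le_opNorm x'
    _ = l2OpNorm R * (‖x'‖ * ‖x'‖) := by ring

/-- If `M` solves the Lyapunov equation `Aᵀ M E + Eᵀ M A + I = 0` and the
symmetric matrix `M̃` satisfies `‖M̃ - M‖ < 1 / (‖Aᵀ‖‖E‖ + ‖A‖‖Eᵀ‖)` in the
operator norm induced by the Euclidean norm, then `M̃` solves the Lyapunov
inequality, i.e. `Aᵀ M̃ E + Eᵀ M̃ A` is negative definite. -/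
theorem stmt_12 {n : ℕ} (E A M Mt : Matrix (Fin n) (Fin n) ℝ)
    (hM : Aᵀ * M * E + Eᵀ * M * A + 1 = 0)
    (hMt : Mt.IsSymm)
    (hclose : l2OpNorm (Mt - M) <
      1 / (l2OpNorm Aᵀ * l2OpNorm E + l2OpNorm A * l2OpNorm Eᵀ)) :
    (-(Aᵀ * Mt * E + Eᵀ * Mt * A)).PosDef := by
  set d := l2OpNorm Aᵀ * l2OpNorm E + l2OpNorm A * l2OpNorm Eᵀ with hd
  have hd0 : 0 ≤ d :=
    add_nonneg (mul_nonneg (l2OpNorm_nonneg _) (l2OpNorm_nonneg _))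
      (mul_nonneg (l2OpNorm_nonneg _) (l2OpNorm_nonneg _))
  have hdpos : 0 < d := by
    rcases hd0.lt_or_eq with h | h
    · exact h
    · exfalso
      rw [← h] at hclose
      simp at hclose
      exact absurd hclose (not_lt.mpr (l2OpNorm_nonneg _))
  set D := Mt - M with hD
  set R := Aᵀ * D * E + Eᵀ * D * A with hR
  have hM' : Aᵀ * M * E + Eᵀ * M * A = -1 := by
    have := hM
    rw [add_eq_zero_iff_eq_neg] at this
    exact this
  have hkey : R = (Aᵀ * Mt * E + Eᵀ * Mt * A) - (Aᵀ * M * E + Eᵀ * M * A) := by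
    rw [hR, hD]
    simp only [Matrix.mul_sub, Matrix.sub_mul]
    abel
  have hdec : -(Aᵀ * Mt * E + Eᵀ * Mt * A) = 1 - R := by
    rw [hkey, hM']
    abel
  have hRnorm : l2OpNorm R < 1 := by
    have h1 : l2OpNorm R ≤ d * l2OpNorm D := by
      calc l2OpNorm R ≤ l2OpNorm (Aᵀ * D * E) + l2OpNorm (Eᵀ * D * A) := by
            unfold l2OpNorm; rw [map_add]; exact norm_add_le _ _
        _ ≤ l2OpNorm Aᵀ * l2OpNorm D * l2OpNorm E
              + l2OpNorm Eᵀ * l2OpNorm D * l2OpNorm A :=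
            add_le_add (l2OpNorm_mul3_le _ _ _) (l2OpNorm_mul3_le _ _ _)
        _ = d * l2OpNorm D := by rw [hd]; ring
    calc l2OpNorm R ≤ d * l2OpNorm D := h1
      _ < d * (1 / d) := by gcongr
      _ = 1 := by field_simp
  refine posDef_iff_dotProduct_mulVec.mpr ⟨?_, ?_⟩
  · -- IsHermitian
    have hMtT : Mtᵀ = Mt := hMt
    show (-(Aᵀ * Mt * E + Eᵀ * Mt * A))ᴴ = _
    rw [conjTranspose_eq_transpose_of_trivial, transpose_neg, transpose_add,
      transpose_mul, transpose_mul, transpose_mul, transpose_mul,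
      transpose_transpose, transpose_transpose, hMtT, Matrix.mul_assoc,
      Matrix.mul_assoc, ← Matrix.mul_assoc Eᵀ, ← Matrix.mul_assoc Aᵀ, add_comm]
  · intro x hx
    rw [hdec]
    have hxx : 0 < x ⬝ᵥ x := by
      have := dotProduct_star_self_pos_iff (v := x) |>.mpr hx
      simpa using this
    have hb := quad_bound R x
    have heq : star x ⬝ᵥ ((1 - R) *ᵥ x) = x ⬝ᵥ x - x ⬝ᵥ (R *ᵥ x) := by
      simp [sub_mulVec, dotProduct_sub, one_mulVec]
    rw [heq]
    have hlt : x ⬝ᵥ (R *ᵥ x) < x ⬝ᵥ x := by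
      calc x ⬝ᵥ (R *ᵥ x) ≤ |x ⬝ᵥ (R *ᵥ x)| := le_abs_self _
        _ ≤ l2OpNorm R * (x ⬝ᵥ x) := hb
        _ < 1 * (x ⬝ᵥ x) := by gcongr
        _ = x ⬝ᵥ x := one_mul _
    linarith
end
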